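/- Let m be a positive integer and s a squarefree positive integer coprime to m; set r = m·s and let ν(s) denote the number of prime divisors of s. Then Tr_{ℚ(μ_r)/ℚ(μ_m)}(ζ_r) = (−1)^{ν(s)} · ζ_m^{t}, where t is any integer with t·s ≡ 1 (mod m). -/

import Mathlib

open Polynomial Finset

lemma pow_congr_of_modEq {M : Type*} [Monoid M] {ζ : M} {n : ℕ} (h1 : ζ ^ n = 1)
    {a b : ℕ} (hab : a ≡ b [MOD n]) : ζ ^ a = ζ ^ b := by
  conv_lhs => rw [← Nat.div_add_mod a n]
  conv_rhs => rw [← Nat.div_add_mod b n]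
  rw [pow_add, pow_add, pow_mul, pow_mul, h1, one_pow, one_pow,
    show a % n = b % n from hab]

lemma sum_nthRootsFinset (n : ℕ) (hn : 0 < n) :
    ∑ x ∈ nthRootsFinset n (1 : ℂ), x = if n = 1 then 1 else 0 := by
  rcases eq_or_lt_of_le (show 1 ≤ n from hn) with h1 | h1
  · have : nthRootsFinset n (1 : ℂ) = {1} := by
      ext x
      rw [Polynomial.mem_nthRootsFinset hn, ← h1, pow_one, Finset.mem_singleton]
    rw [← h1] at this ⊢
    simp [this]
  · have hζ : IsPrimitiveRoot (Complex.exp (2 * Real.pi * Complex.I / n)) n :=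
      Complex.isPrimitiveRoot_exp n hn.ne'
    set ζ := Complex.exp (2 * Real.pi * Complex.I / n)
    have himg : Finset.image (ζ * ·) (nthRootsFinset n (1 : ℂ)) = nthRootsFinset n (1 : ℂ) := by
      apply Finset.eq_of_subset_of_card_le
      · intro x hx
        obtain ⟨y, hy, rfl⟩ := Finset.mem_image.mp hx
        exact (mul_one (1 : ℂ)) ▸ mul_mem_nthRootsFinset (hζ.mem_nthRootsFinset hn) hy
      · rw [Finset.card_image_of_injective _ (mul_right_injective₀ (hζ.ne_zero hn.ne'))]
    have hS : ζ * ∑ x ∈ nthRootsFinset n (1 : ℂ), x = ∑ x ∈ nthRootsFinset n (1 : ℂ), x := by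
      rw [Finset.mul_sum]
      nth_rewrite 2 [← himg]
      rw [Finset.sum_image (fun a _ b _ hab => mul_right_injective₀ (hζ.ne_zero hn.ne') hab)]
    have hζ1 : ζ ≠ 1 := hζ.ne_one h1
    have h2 : (ζ - 1) * ∑ x ∈ nthRootsFinset n (1 : ℂ), x = 0 := by
      rw [sub_mul, one_mul, hS, sub_self]
    rw [if_neg (by omega)]
    rcases mul_eq_zero.mp h2 with h | h
    · exact absurd (sub_eq_zero.mp h) hζ1
    · exact h

open ArithmeticFunction ArithmeticFunction.Moebius in
lemma sum_primitiveRoots_eq_moebius (n : ℕ) (hn : 0 < n) :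
    ∑ θ ∈ primitiveRoots n ℂ, θ = (μ n : ℂ) := by
  have key : ∀ k > 0, ∑ d ∈ k.divisors, (∑ θ ∈ primitiveRoots d ℂ, θ)
      = (fun k => if k = 1 then (1:ℂ) else 0) k := by
    intro k hk
    have hζ : IsPrimitiveRoot (Complex.exp (2 * Real.pi * Complex.I / k)) k :=
      Complex.isPrimitiveRoot_exp k hk.ne'
    rw [← Finset.sum_biUnion (fun i _ j _ hij => IsPrimitiveRoot.disjoint hij),
      ← IsPrimitiveRoot.nthRoots_one_eq_biUnion_primitiveRoots]
    exact sum_nthRootsFinset k hk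
  have := (ArithmeticFunction.sum_eq_iff_sum_mul_moebius_eq
    (f := fun d => ∑ θ ∈ primitiveRoots d ℂ, θ)
    (g := fun k => if k = 1 then (1:ℂ) else 0)).mp key n hn
  rw [← this]
  rw [Finset.sum_eq_single_of_mem (n, 1)
    (Nat.mem_divisorsAntidiagonal.mpr ⟨mul_one n, hn.ne'⟩)]
  · simp
  · rintro ⟨a, b⟩ hab hne
    obtain ⟨hmul, -⟩ := Nat.mem_divisorsAntidiagonal.mp hab
    rcases eq_or_ne b 1 with rfl | hb
    · rw [mul_one] at hmul
      exact absurd (by simp only [] at hmul; rw [hmul]) hne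
    · simp [hb]

set_option maxHeartbeats 1000000 in
set_option synthInstance.maxHeartbeats 400000 in

open IntermediateField in
theorem stmt2 (m s : ℕ) (hm : 0 < m) (hsq : Squarefree s) (hcop : Nat.Coprime s m)
    (r : ℕ) (hr : r = m * s) (ζ : ℂ) (hζ : IsPrimitiveRoot ζ r)
    (t : ℤ) (ht : t * (s : ℤ) ≡ 1 [ZMOD (m : ℤ)])
    (h : IntermediateField.adjoin ℚ {ζ ^ s} ≤ IntermediateField.adjoin ℚ {ζ}) :
    letI : Algebra (IntermediateField.adjoin ℚ {ζ ^ s}) (IntermediateField.adjoin ℚ {ζ}) :=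
      (IntermediateField.inclusion h).toRingHom.toAlgebra
    Algebra.trace (IntermediateField.adjoin ℚ {ζ ^ s}) (IntermediateField.adjoin ℚ {ζ})
        ⟨ζ, IntermediateField.mem_adjoin_simple_self ℚ ζ⟩
      = (-1 : IntermediateField.adjoin ℚ {ζ ^ s}) ^ s.primeFactors.card *
        (⟨ζ ^ s, IntermediateField.mem_adjoin_simple_self ℚ (ζ ^ s)⟩ :
          IntermediateField.adjoin ℚ {ζ ^ s}) ^ t := by
  letI : Algebra (IntermediateField.adjoin ℚ {ζ ^ s}) (IntermediateField.adjoin ℚ {ζ}) :=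
    (IntermediateField.inclusion h).toRingHom.toAlgebra
  have hincl : ∀ x : (IntermediateField.adjoin ℚ {ζ ^ s}),
      ((algebraMap (IntermediateField.adjoin ℚ {ζ ^ s}) (IntermediateField.adjoin ℚ {ζ}) x
        : ℂ)) = (x : ℂ) := fun x => rfl
  haveI tower1 : IsScalarTower ℚ (IntermediateField.adjoin ℚ {ζ ^ s})
      (IntermediateField.adjoin ℚ {ζ}) :=
    IsScalarTower.of_algebraMap_eq fun x => Subtype.ext (by rw [hincl]; rfl)
  have hs : 0 < s := Nat.pos_of_ne_zero hsq.ne_zero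
  have hrpos : 0 < r := hr ▸ Nat.mul_pos hm hs
  -- Bezout-style exponents
  set e := s ^ (m.totient - 1) with he
  set f := m ^ (s.totient - 1) with hf
  have hes : e * s ≡ 1 [MOD m] := by
    have h1 : e * s = s ^ m.totient := by
      rw [he, ← pow_succ, Nat.sub_add_cancel (Nat.totient_pos.mpr hm)]
    rw [h1]
    exact Nat.ModEq.pow_totient hcop
  have hfm : f * m ≡ 1 [MOD s] := by
    have h1 : f * m = m ^ s.totient := by
      rw [hf, ← pow_succ, Nat.sub_add_cancel (Nat.totient_pos.mpr hs)]
    rw [h1]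
    exact Nat.ModEq.pow_totient hcop.symm
  have key : s * e + m * f ≡ 1 [MOD r] := by
    rw [hr, ← Nat.modEq_and_modEq_iff_modEq_mul hcop.symm]
    constructor
    · have h0 : s * e + m * f ≡ 1 + 0 [MOD m] :=
        Nat.ModEq.add (mul_comm e s ▸ hes) ((Nat.modEq_zero_iff_dvd).mpr ⟨f, rfl⟩)
      simpa using h0
    · have h0 : s * e + m * f ≡ 0 + 1 [MOD s] :=
        Nat.ModEq.add ((Nat.modEq_zero_iff_dvd).mpr ⟨e, rfl⟩) (mul_comm f m ▸ hfm)
      simpa using h0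
  have hζ1 : ζ ^ (s * e + m * f) = ζ := by
    rw [pow_congr_of_modEq hζ.pow_eq_one key, pow_one]
  -- instances
  have hint : IsIntegral ℚ ζ := by
    refine IsIntegral.of_pow hrpos ?_
    rw [hζ.pow_eq_one]
    exact isIntegral_one
  haveI : FiniteDimensional ℚ (IntermediateField.adjoin ℚ {ζ}) :=
    IntermediateField.adjoin.finiteDimensional hint
  haveI : FiniteDimensional ℚ (IntermediateField.adjoin ℚ {ζ ^ s}) :=
    IntermediateField.adjoin.finiteDimensional (hint.pow s)
  haveI : FiniteDimensional (IntermediateField.adjoin ℚ {ζ ^ s})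
      (IntermediateField.adjoin ℚ {ζ}) :=
    FiniteDimensional.right ℚ _ _
  haveI : CharZero (IntermediateField.adjoin ℚ {ζ ^ s}) :=
    charZero_of_injective_algebraMap
      (algebraMap ℚ (IntermediateField.adjoin ℚ {ζ ^ s})).injective
  haveI : Algebra.IsSeparable (IntermediateField.adjoin ℚ {ζ ^ s})
      (IntermediateField.adjoin ℚ {ζ}) := Algebra.IsSeparable.of_integral _ _
  -- primitive roots
  have hζm : IsPrimitiveRoot (ζ ^ s) m := hζ.pow hrpos (hr.trans (mul_comm m s))
  have hηc : IsPrimitiveRoot (ζ ^ (m * f)) s := by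
    have h1 : IsPrimitiveRoot (ζ ^ m) s := hζ.pow hrpos hr
    have h2 := h1.pow_of_coprime f (Nat.Coprime.pow_left _ hcop.symm)
    rwa [← pow_mul] at h2
  -- finrank computations
  have hfL : Module.finrank ℚ (IntermediateField.adjoin ℚ {ζ}) = r.totient := by
    rw [IntermediateField.adjoin.finrank hint,
      ← Polynomial.cyclotomic_eq_minpoly_rat hζ hrpos, Polynomial.natDegree_cyclotomic]
  have hfK : Module.finrank ℚ (IntermediateField.adjoin ℚ {ζ ^ s}) = m.totient := by
    rw [IntermediateField.adjoin.finrank (hint.pow s),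
      ← Polynomial.cyclotomic_eq_minpoly_rat hζm hm, Polynomial.natDegree_cyclotomic]
  have hfKL : Module.finrank (IntermediateField.adjoin ℚ {ζ ^ s})
      (IntermediateField.adjoin ℚ {ζ}) = s.totient := by
    have h1 := Module.finrank_mul_finrank ℚ (IntermediateField.adjoin ℚ {ζ ^ s})
      (IntermediateField.adjoin ℚ {ζ})
    rw [hfK, hfL, hr, Nat.totient_mul hcop.symm] at h1
    exact Nat.eq_of_mul_eq_mul_left (Nat.totient_pos.mpr hm) h1
  -- elements
  set ζL : (IntermediateField.adjoin ℚ {ζ}) :=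
    (⟨ζ, IntermediateField.mem_adjoin_simple_self ℚ ζ⟩ : (IntermediateField.adjoin ℚ {ζ}))
    with hζLdef
  set ηL : (IntermediateField.adjoin ℚ {ζ}) :=
    (⟨ζ ^ (m * f), pow_mem (IntermediateField.mem_adjoin_simple_self ℚ ζ) _⟩ :
      (IntermediateField.adjoin ℚ {ζ})) with hηLdef
  set zK : (IntermediateField.adjoin ℚ {ζ ^ s}) :=
    (⟨ζ ^ s, IntermediateField.mem_adjoin_simple_self ℚ (ζ ^ s)⟩ :
      (IntermediateField.adjoin ℚ {ζ ^ s})) with hzKdef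
  set c : (IntermediateField.adjoin ℚ {ζ ^ s}) := zK ^ e with hc
  have hcoeC : (algebraMap (IntermediateField.adjoin ℚ {ζ ^ s}) ℂ) c = (ζ ^ s) ^ e := rfl
  have hζLc : ζL = algebraMap (IntermediateField.adjoin ℚ {ζ ^ s})
      (IntermediateField.adjoin ℚ {ζ}) c * ηL := by
    apply Subtype.ext
    rw [MulMemClass.coe_mul, hincl c]
    show ζ = (ζ ^ s) ^ e * ζ ^ (m * f)
    rw [← pow_mul, ← pow_add, hζ1]
  have hηL : IsPrimitiveRoot ηL s := by
    apply IsPrimitiveRoot.of_map_of_injective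
      (f := algebraMap (IntermediateField.adjoin ℚ {ζ}) ℂ)
    · exact hηc
    · exact (algebraMap (IntermediateField.adjoin ℚ {ζ}) ℂ).injective
  -- bijection between embeddings and primitive s-th roots
  have hcards : Fintype.card ((IntermediateField.adjoin ℚ {ζ}) →ₐ[(IntermediateField.adjoin
      ℚ {ζ ^ s})] ℂ) = (primitiveRoots s ℂ).card := by
    rw [AlgHom.card, hfKL, hηc.card_primitiveRoots]
  set Fmap : ((IntermediateField.adjoin ℚ {ζ}) →ₐ[(IntermediateField.adjoin ℚ {ζ ^ s})] ℂ)
      → {x // x ∈ primitiveRoots s ℂ} := fun σ =>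
    ⟨σ ηL, by
      rw [mem_primitiveRoots hs]
      exact hηL.map_of_injective σ.toRingHom.injective⟩ with hFmap
  have hinj : Function.Injective Fmap := by
    intro σ σ' hσ
    have hη : σ ηL = σ' ηL := congrArg Subtype.val hσ
    have hζeq : σ ζL = σ' ζL := by
      rw [hζLc, map_mul, map_mul, σ.commutes, σ'.commutes, hη]
    have hres : σ.restrictScalars ℚ = σ'.restrictScalars ℚ := by
      apply IntermediateField.adjoin_algHom_ext
      intro x hx
      rw [Set.mem_singleton_iff] at hx
      subst hx
      exact hζeq
    exact AlgHom.ext fun x => DFunLike.congr_fun hres x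
  have hbij : Function.Bijective Fmap :=
    (Fintype.bijective_iff_injective_and_card Fmap).mpr
      ⟨hinj, by rw [hcards, Fintype.card_coe]⟩
  have hsum : ∑ σ : ((IntermediateField.adjoin ℚ {ζ}) →ₐ[(IntermediateField.adjoin ℚ
      {ζ ^ s})] ℂ), σ ηL = ∑ θ ∈ primitiveRoots s ℂ, θ := by
    rw [← Finset.sum_coe_sort (primitiveRoots s ℂ) (fun x : ℂ => x)]
    exact Fintype.sum_bijective Fmap hbij _ _ fun σ => rfl
  -- congruence e ≡ t mod m
  haveI : NeZero m := ⟨hm.ne'⟩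
  have het : (e : ℤ) ≡ t [ZMOD (m : ℤ)] := by
    have h1 : ((e : ZMod m)) * (s : ZMod m) = 1 := by
      have h0 := (ZMod.natCast_eq_natCast_iff (e * s) 1 m).mpr hes
      push_cast at h0
      exact h0
    have h2 : ((t : ZMod m)) * (s : ZMod m) = 1 := by
      have h0 := (ZMod.intCast_eq_intCast_iff (t * (s : ℤ)) 1 m).mpr ht
      push_cast at h0
      exact h0
    have h3 : (((e : ℤ) : ZMod m)) = ((t : ZMod m)) := by
      push_cast
      calc (e : ZMod m) = (e : ZMod m) * ((t : ZMod m) * (s : ZMod m)) := by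
            rw [h2, mul_one]
        _ = ((e : ZMod m) * (s : ZMod m)) * (t : ZMod m) := by ring
        _ = (t : ZMod m) := by rw [h1, one_mul]
    exact (ZMod.intCast_eq_intCast_iff _ _ _).mp h3
  -- The zpow identity in ℂ
  have hzsne : (ζ : ℂ) ^ s ≠ 0 := pow_ne_zero s (hζ.ne_zero hrpos.ne')
  have hzt : ((ζ ^ s : ℂ)) ^ t = ((ζ ^ s : ℂ)) ^ (e : ℤ) := by
    obtain ⟨k, hk⟩ := het.dvd
    have hk' : t = (e : ℤ) + (m : ℤ) * k := by linarith [hk]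
    have h6 : ((ζ : ℂ) ^ s) ^ (m : ℤ) = 1 := by
      rw [zpow_natCast, ← pow_mul, mul_comm s m, ← hr, hζ.pow_eq_one]
    have h5 : ((ζ : ℂ) ^ s) ^ ((m : ℤ) * k) = 1 := by
      rw [zpow_mul, h6, one_zpow]
    rw [hk', zpow_add₀ hzsne, h5, mul_one]
  -- assemble
  apply (algebraMap (IntermediateField.adjoin ℚ {ζ ^ s}) ℂ).injective
  rw [trace_eq_sum_embeddings (E := ℂ)]
  have lhs_eq : ∑ σ : ((IntermediateField.adjoin ℚ {ζ}) →ₐ[(IntermediateField.adjoin ℚ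
      {ζ ^ s})] ℂ), σ ζL = (ζ ^ s) ^ e * ∑ θ ∈ primitiveRoots s ℂ, θ := by
    rw [← hsum, Finset.mul_sum]
    apply Finset.sum_congr rfl
    intro σ _
    rw [hζLc, map_mul, σ.commutes, hcoeC]
  rw [lhs_eq, sum_primitiveRoots_eq_moebius s hs]
  -- RHS
  rw [map_mul, map_pow, map_neg, map_one, map_zpow₀]
  have hzKC : (algebraMap (IntermediateField.adjoin ℚ {ζ ^ s}) ℂ) zK = ζ ^ s := rfl
  rw [hzKC, hzt]
  have hμ : (ArithmeticFunction.moebius s : ℂ) = (-1 : ℂ) ^ s.primeFactors.card := by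
    rw [ArithmeticFunction.moebius_apply_of_squarefree hsq]
    push_cast
    congr 1
    rw [ArithmeticFunction.cardFactors_apply]
    exact (List.toFinset_card_of_nodup ((Nat.squarefree_iff_nodup_primeFactorsList
      hs.ne').mp hsq)).symm
  rw [hμ, zpow_natCast]
  ring
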